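/- Let a, b be distinct points of the open unit disk 𝔹² ⊂ ℂ, let k := (a−b)·conj(a)·conj(b) + conj(a) − conj(b), and let w be either of the two points (|a|² − |b|² ± i·|a−b|·√((1−|a|²)(1−|b|²)))/k. Then |w| = 1, and for every z ∈ ℂ with |z| = 1 the equation (a−w)(conj(b)−conj(w))(b−z)(conj(a)−conj(z)) = (b−w)(conj(a)−conj(w))(a−z)(conj(b)−conj(z)) holds if and only if z = w; that is, the circle through a, b and w meets the unit circle only at w, so it is internally tangent to the unit circle at w. -/

import Mathlib

open Complex

/-- Lemma 3.13 (1) (tangency points): for distinct `a, b` in the unit disk,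
`k = (a−b)·conj a·conj b + conj a − conj b`, and `w` either of the two points
`(|a|²−|b|² ± i|a−b|√((1−|a|²)(1−|b|²)))/k`, one has `|w| = 1` and the circle through
`a, b, w` meets the unit circle exactly at `w` (internal tangency at `w`). -/
theorem stmt_13 (a b w : ℂ) (ha : ‖a‖ < 1) (hb : ‖b‖ < 1) (hab : a ≠ b)
    (hw : w = ((((‖a‖)^2 - (‖b‖)^2 : ℝ) : ℂ)
          + Complex.I * ((‖a - b‖ : ℝ) : ℂ)
            * ((Real.sqrt ((1 - (‖a‖)^2) * (1 - (‖b‖)^2)) : ℝ) : ℂ)) /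
          ((a - b) * (starRingEnd ℂ a) * (starRingEnd ℂ b)
            + (starRingEnd ℂ a) - (starRingEnd ℂ b)) ∨
      w = ((((‖a‖)^2 - (‖b‖)^2 : ℝ) : ℂ)
          - Complex.I * ((‖a - b‖ : ℝ) : ℂ)
            * ((Real.sqrt ((1 - (‖a‖)^2) * (1 - (‖b‖)^2)) : ℝ) : ℂ)) /
          ((a - b) * (starRingEnd ℂ a) * (starRingEnd ℂ b)
            + (starRingEnd ℂ a) - (starRingEnd ℂ b))) :
    ‖w‖ = 1 ∧
    ∀ z : ℂ, ‖z‖ = 1 →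
      ((a - w) * ((starRingEnd ℂ b) - (starRingEnd ℂ w)) * (b - z)
          * ((starRingEnd ℂ a) - (starRingEnd ℂ z)) =
        (b - w) * ((starRingEnd ℂ a) - (starRingEnd ℂ w)) * (a - z)
          * ((starRingEnd ℂ b) - (starRingEnd ℂ z)) ↔ z = w) := by
  set A : ℂ := (starRingEnd ℂ) a with hA
  set B : ℂ := (starRingEnd ℂ) b with hB
  set k : ℂ := (a - b) * A * B + A - B with hkdef
  set t : ℝ := ‖a - b‖ with htdef
  set s : ℝ := Real.sqrt ((1 - (‖a‖)^2) * (1 - (‖b‖)^2)) with hsdef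
  have ha0 : (0:ℝ) ≤ ‖a‖ := norm_nonneg a
  have hb0 : (0:ℝ) ≤ ‖b‖ := norm_nonneg b
  have ht0 : (0:ℝ) < t := by
    rw [htdef]
    exact norm_pos_iff.mpr (sub_ne_zero.mpr hab)
  have h1a : (0:ℝ) < 1 - (‖a‖)^2 := by nlinarith
  have h1b : (0:ℝ) < 1 - (‖b‖)^2 := by nlinarith
  have hs0 : (0:ℝ) < s := by
    rw [hsdef]
    exact Real.sqrt_pos.mpr (mul_pos h1a h1b)
  have ha2 : ((‖a‖ : ℝ) : ℂ)^2 = a * A := by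
    rw [hA, ← Complex.ofReal_pow, Complex.sq_norm, Complex.mul_conj]
  have hb2 : ((‖b‖ : ℝ) : ℂ)^2 = b * B := by
    rw [hB, ← Complex.ofReal_pow, Complex.sq_norm, Complex.mul_conj]
  have ht : ((t : ℝ) : ℂ)^2 = (a - b) * (A - B) := by
    have h1 : ((t : ℝ) : ℂ)^2 = ((t^2 : ℝ) : ℂ) := by push_cast; ring
    rw [h1, htdef, Complex.sq_norm, ← Complex.mul_conj (a - b), map_sub, hA, hB]
  have hs : ((s : ℝ) : ℂ)^2 = (1 - a * A) * (1 - b * B) := by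
    have h1 : s^2 = (1 - (‖a‖)^2) * (1 - (‖b‖)^2) := by
      rw [hsdef]
      exact Real.sq_sqrt (le_of_lt (mul_pos h1a h1b))
    have h2 : ((s : ℝ) : ℂ)^2 = ((s^2 : ℝ) : ℂ) := by push_cast; ring
    rw [h2, h1]
    push_cast
    rw [ha2, hb2]
  have hd : ((((‖a‖)^2 - (‖b‖)^2 : ℝ)) : ℂ) = a * A - b * B := by
    push_cast
    rw [ha2, hb2]
  -- unify the two cases
  obtain ⟨e, he2, hce, hwe⟩ : ∃ e : ℂ, e^2 = -1 ∧ (starRingEnd ℂ) e = -e ∧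
      w = ((((‖a‖)^2 - (‖b‖)^2 : ℝ) : ℂ) + e * (t : ℂ) * (s : ℂ)) / k := by
    rcases hw with h | h
    · exact ⟨Complex.I, Complex.I_sq, Complex.conj_I, h⟩
    · refine ⟨-Complex.I, by rw [neg_sq, Complex.I_sq], by simp, ?_⟩
      rw [h]; ring_nf
  have hck : (starRingEnd ℂ) k = (A - B) * a * b + a - b := by
    rw [hkdef, hA, hB]
    simp only [map_add, map_sub, map_mul, Complex.conj_conj]
  have h_id : (a * A - b * B + e * (t:ℂ) * (s:ℂ)) * (a * A - b * B - e * (t:ℂ) * (s:ℂ))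
      = k * ((A - B) * a * b + a - b) := by
    rw [hkdef]
    linear_combination (-(t:ℂ)^2 * (s:ℂ)^2) * he2 + (s:ℂ)^2 * ht + ((a-b)*(A-B)) * hs
  have hnormk : Complex.normSq k = ((‖a‖)^2 - (‖b‖)^2)^2 + t^2 * s^2 := by
    have h1 : ((Complex.normSq k : ℝ) : ℂ)
        = ((((‖a‖)^2 - (‖b‖)^2)^2 + t^2 * s^2 : ℝ) : ℂ) := by
      rw [← Complex.mul_conj k, hck]
      rw [← h_id]
      push_cast
      rw [ha2, hb2]
      linear_combination (-(t:ℂ)^2 * (s:ℂ)^2) * he2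
    exact_mod_cast h1
  have hk0 : k ≠ 0 := by
    intro h
    rw [h, Complex.normSq_zero] at hnormk
    nlinarith [mul_pos (pow_pos ht0 2) (pow_pos hs0 2),
      sq_nonneg ((‖a‖)^2 - (‖b‖)^2)]
  have hv : k * w = (a * A - b * B) + e * (t:ℂ) * (s:ℂ) := by
    rw [hwe, hd.symm]
    field_simp
  -- |w| = 1
  have hnormw : Complex.normSq w = 1 := by
    have hcv : (starRingEnd ℂ) (k * w) = (a * A - b * B) - e * (t:ℂ) * (s:ℂ) := by
      rw [hv, hA, hB]
      simp only [map_add, map_sub, map_mul, Complex.conj_conj, hce, Complex.conj_ofReal]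
      ring
    have h1 : ((Complex.normSq k * Complex.normSq w : ℝ) : ℂ) = ((Complex.normSq k : ℝ) : ℂ) := by
      rw [← Complex.normSq_mul, ← Complex.mul_conj (k * w), ← Complex.mul_conj k]
      rw [hcv, hv, hck]
      exact h_id
    have h2 : Complex.normSq k * Complex.normSq w = Complex.normSq k := by exact_mod_cast h1
    have h3 : Complex.normSq k ≠ 0 := (Complex.normSq_pos.mpr hk0).ne'
    have h4 : Complex.normSq k * Complex.normSq w = Complex.normSq k * 1 := by
      rw [mul_one]; exact h2
    exact mul_left_cancel₀ h3 h4
  have habsw : ‖w‖ = 1 := by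
    have := Complex.sq_norm w
    rw [hnormw] at this
    nlinarith [norm_nonneg w]
  have hw0 : w ≠ 0 := by
    intro h; rw [h] at habsw; simp at habsw
  refine ⟨habsw, fun z hz => ?_⟩
  have hz0 : z ≠ 0 := by
    intro h; rw [h] at hz; simp at hz
  set Z : ℂ := (starRingEnd ℂ) z with hZ
  set Y : ℂ := (starRingEnd ℂ) w with hY
  have hcz : Z * z = 1 := by
    rw [hZ, mul_comm, Complex.mul_conj, ← Complex.sq_norm, hz]
    norm_num
  have hcw : Y * w = 1 := by
    rw [hY, mul_comm, Complex.mul_conj, ← Complex.sq_norm, habsw]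
    norm_num
  constructor
  · intro hE
    have hF : (a - w) * (B * w - 1) * (b - z) * (A * z - 1)
        = (b - w) * (A * w - 1) * (a - z) * (B * z - 1) := by
      linear_combination (z * w) * hE
        + (B*z*w^2 + b*w^2*Y + (-1:ℂ)*b*z*w*Y + (-1:ℂ)*b*B*w^2 + (-1:ℂ)*A*z*w^2 + A*b*z*w + (-1:ℂ)*a*w^2*Y + a*z*w*Y + (-1:ℂ)*a*B*z*w + a*b*B*w + a*A*w^2 + (-1:ℂ)*a*A*b*w) * hcz
        + ((-1:ℂ)*B*z^2*w + b*w + (-1:ℂ)*b*z + b*B*z^2 + A*z^2*w + (-1:ℂ)*A*b*z*w + (-1:ℂ)*a*w + a*z + a*B*z*w + (-1:ℂ)*a*b*B*z + (-1:ℂ)*a*A*z^2 + a*A*b*z) * hcw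
    have key : (k * (z - w))^2 * (e * (t:ℂ) * (s:ℂ)) = 0 := by
      rw [hkdef]
      linear_combination (-(((a - b) * A * B + A - B)^2)) * hF
        + ((e*(t:ℂ)*(s:ℂ) + (-B*(b-z)*(A*z-1) + A*(a-z)*(B*z-1)))
            * (((a - b) * A * B + A - B)*w + (a*A - b*B + e*(t:ℂ)*(s:ℂ)))
          + (-2*z*(e*(t:ℂ)*(s:ℂ)) + ((a*B+1)*(b-z)*(A*z-1) - (b*A+1)*(a-z)*(B*z-1)))
            * ((a - b) * A * B + A - B)) * hv
        + ((t:ℂ)^2*(s:ℂ)^2*(e*(t:ℂ)*(s:ℂ) + (a*A - b*B) - z*((a - b) * A * B + A - B))) * he2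
        + (-(s:ℂ)^2*(e*(t:ℂ)*(s:ℂ) + (a*A - b*B) - z*((a - b) * A * B + A - B))) * ht
        + (-((a-b)*(A-B))*(e*(t:ℂ)*(s:ℂ) + (a*A - b*B) - z*((a - b) * A * B + A - B))) * hs
    have he0 : e ≠ 0 := by
      intro h; rw [h] at he2; norm_num at he2
    have htne : ((t:ℝ):ℂ) ≠ 0 := by exact_mod_cast ht0.ne'
    have hsne : ((s:ℝ):ℂ) ≠ 0 := by exact_mod_cast hs0.ne'
    have hts : e * (t:ℂ) * (s:ℂ) ≠ 0 := mul_ne_zero (mul_ne_zero he0 htne) hsne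
    have h4 : (k * (z - w))^2 = 0 := by
      rcases mul_eq_zero.mp key with h | h
      · exact h
      · exact absurd h hts
    have h5 : k * (z - w) = 0 := by
      exact pow_eq_zero_iff (by norm_num) |>.mp h4
    rcases mul_eq_zero.mp h5 with h | h
    · exact absurd h hk0
    · exact sub_eq_zero.mp h
  · rintro rfl
    ring
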